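/- For α > 2, d > 0, T ≥ 0 and s > 0, ∫_{ℝ²} (1 - 1/(1 + s‖x‖^{-α})) dx = (2/α)·π²·s^{2/α}·csc(2π/α), where the integral is over x ∈ ℝ² with Lebesgue measure. -/

import Mathlib

open Real MeasureTheory

open Set

lemma beta_real (p : ℝ) (hp0 : 0 < p) (hp1 : p < 1) :
    ∫ x in (0:ℝ)..1, x ^ (p-1) * (1-x) ^ (-p) = π / Real.sin (π * p) := by
  have h1p : (0:ℝ) < 1 - p := by linarith
  have hc : Complex.betaIntegral p (1-p) = ↑(π / Real.sin (π * p)) := by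
    have := Complex.Gamma_mul_Gamma_eq_betaIntegral (s := (p:ℂ)) (t := ((1-p:ℝ):ℂ))
      (by simpa using hp0) (by simpa using h1p)
    push_cast at this
    rw [show ((p:ℂ) + (1-(p:ℂ))) = 1 by ring, Complex.Gamma_one, one_mul] at this
    rw [← this, Complex.Gamma_mul_Gamma_one_sub]
    push_cast [Complex.ofReal_sin]
    ring
  have h2 : Complex.betaIntegral p (1-p)
      = ((∫ x in (0:ℝ)..1, x ^ (p-1) * (1-x) ^ (-p) : ℝ) : ℂ) := by
    rw [Complex.betaIntegral, ← intervalIntegral.integral_ofReal]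
    refine intervalIntegral.integral_congr_ae ?_
    have : ∀ᵐ x : ℝ, x ∈ Set.uIoc (0:ℝ) 1 → (x:ℂ) ^ ((p:ℂ) - 1) * (1 - (x:ℂ)) ^ ((1 - (p:ℂ) - 1))
        = ((x ^ (p-1) * (1-x) ^ (-p) : ℝ) : ℂ) := by
      filter_upwards with x hx
      rw [Set.uIoc_of_le zero_le_one] at hx
      have hx0 : (0:ℝ) < x := hx.1
      have hx1 : x ≤ 1 := hx.2
      rw [Complex.ofReal_mul, Complex.ofReal_cpow hx0.le,
        Complex.ofReal_cpow (by linarith : (0:ℝ) ≤ 1 - x)]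
      push_cast
      ring_nf
    exact this
  rw [h2] at hc
  exact_mod_cast hc

lemma mellin_one_add (p : ℝ) (hp0 : 0 < p) (hp1 : p < 1)
    (hb : ∫ x in (0:ℝ)..1, x ^ (p-1) * (1-x) ^ (-p) = π / Real.sin (π * p)) :
    ∫ t in Ioi (0:ℝ), t ^ (p-1) / (1+t) = π / Real.sin (π * p) := by
  have himg : (fun x : ℝ => x / (1 - x)) '' Ioo 0 1 = Ioi 0 := by
    ext t
    constructor
    · rintro ⟨x, ⟨hx0, hx1⟩, rfl⟩
      exact div_pos hx0 (by linarith)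
    · intro ht
      refine ⟨t / (1 + t), ⟨div_pos ht (by linarith [ht.out]), ?_⟩, ?_⟩
      · rw [div_lt_one (by linarith [ht.out])]; linarith [ht.out]
      · have h1t : (0:ℝ) < 1 + t := by linarith [ht.out]
        field_simp
        ring
  have hderiv : ∀ x ∈ Ioo (0:ℝ) 1, HasDerivWithinAt (fun x : ℝ => x / (1 - x))
      ((1 - x)^2)⁻¹ (Ioo 0 1) x := by
    intro x hx
    have h : (1:ℝ) - x ≠ 0 := (by linarith [hx.2] : (0:ℝ) < 1 - x).ne'
    have hd := ((hasDerivAt_id x).div ((hasDerivAt_const x (1:ℝ)).sub (hasDerivAt_id x)) h)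
    refine hd.hasDerivWithinAt.congr_deriv ?_
    simp only [Pi.sub_apply, id]
    field_simp
    ring
  have hinj : InjOn (fun x : ℝ => x / (1 - x)) (Ioo 0 1) := by
    intro x hx y hy h
    have hx1 : (1:ℝ) - x ≠ 0 := by have := hx.2; intro h; linarith [(by linarith : x = 1)]
    have hy1 : (1:ℝ) - y ≠ 0 := by have := hy.2; intro h; linarith [(by linarith : y = 1)]
    field_simp at h
    linarith
  have := integral_image_eq_integral_abs_deriv_smul measurableSet_Ioo hderiv hinj
    (fun t => t ^ (p-1) / (1+t))
  rw [himg] at this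
  rw [this]
  rw [← hb, intervalIntegral.integral_of_le zero_le_one, integral_Ioc_eq_integral_Ioo]
  refine Eq.symm ?_
  refine setIntegral_congr_fun measurableSet_Ioo fun x hx => ?_
  obtain ⟨hx0, hx1⟩ := hx
  have h1x : (0:ℝ) < 1 - x := by linarith
  have key : (1:ℝ) + x / (1 - x) = 1 / (1 - x) := by field_simp; ring
  rw [smul_eq_mul, key, Real.div_rpow hx0.le h1x.le, abs_of_pos (by positivity)]
  have key2 : ((1-x):ℝ)^2 * (1-x)^(p-1) = (1-x) * (1-x)^p := by
    rw [← Real.rpow_natCast (1-x) 2, ← Real.rpow_add h1x]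
    nth_rewrite 2 [← Real.rpow_one (1-x)]
    rw [← Real.rpow_add h1x]
    congr 1
    ring
  have hp1x : (0:ℝ) < (1-x) ^ (p-1) := Real.rpow_pos_of_pos h1x _
  have hpp : (0:ℝ) < (1-x) ^ p := Real.rpow_pos_of_pos h1x _
  rw [Real.rpow_neg h1x.le]
  field_simp
  rw [mul_comm, ← Real.rpow_add_one h1x.ne']; congr 1; ring

lemma radial_int (α : ℝ) (hα : 2 < α) (s : ℝ) (hs : 0 < s)
    (hm : ∫ t in Ioi (0:ℝ), t ^ (2/α-1) / (1+t) = π / Real.sin (π * (2/α))) :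
    ∫ r in Ioi (0:ℝ), r * (1 - 1/(1 + s * r ^ (-α)))
      = 1/α * s ^ (2/α) * (π / Real.sin (π * (2/α))) := by
  have hα0 : (0:ℝ) < α := by linarith
  set c : ℝ := s ^ (1/α) with hc
  have hc0 : 0 < c := Real.rpow_pos_of_pos hs _
  have hpow : ∀ t : ℝ, 0 < t → (t ^ α) ^ (1/α) = t := fun t ht => by
    rw [← Real.rpow_mul ht.le, mul_one_div, div_self hα0.ne', Real.rpow_one]
  have hpow' : ∀ t : ℝ, 0 < t → (t ^ (1/α)) ^ α = t := fun t ht => by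
    rw [← Real.rpow_mul ht.le, one_div_mul_cancel hα0.ne', Real.rpow_one]
  have himg : (fun t : ℝ => c * t ^ (1/α)) '' Ioi 0 = Ioi 0 := by
    ext r
    constructor
    · rintro ⟨t, ht, rfl⟩
      exact mul_pos hc0 (Real.rpow_pos_of_pos ht _)
    · intro hr
      refine ⟨(r / c) ^ α, Real.rpow_pos_of_pos (div_pos hr.out hc0) _, ?_⟩
      simp only [hpow _ (div_pos hr.out hc0)]
      field_simp
  have hderiv : ∀ t ∈ Ioi (0:ℝ), HasDerivAt (fun t : ℝ => c * t ^ (1/α))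
      (c * (1/α * t ^ (1/α - 1))) t := fun t ht =>
    (Real.hasDerivAt_rpow_const (Or.inl ht.out.ne') (p := 1/α)).const_mul c
  have hinj : InjOn (fun t : ℝ => c * t ^ (1/α)) (Ioi 0) := by
    intro a ha b hb h
    simp only [mul_right_inj' hc0.ne'] at h
    have := congrArg (fun z : ℝ => z ^ α) h
    rwa [hpow' _ ha.out, hpow' _ hb.out] at this
  have := integral_image_eq_integral_abs_deriv_smul measurableSet_Ioi
    (fun t ht => (hderiv t ht).hasDerivWithinAt) hinj
    (fun r => r * (1 - 1/(1 + s * r ^ (-α))))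
  rw [himg] at this
  rw [this]
  rw [show (1:ℝ)/α * s ^ (2/α) * (π / Real.sin (π * (2/α)))
      = ∫ t in Ioi (0:ℝ), 1/α * s ^ (2/α) * (t ^ (2/α-1) / (1+t)) by
    rw [integral_const_mul, hm]]
  refine setIntegral_congr_fun measurableSet_Ioi fun t ht => ?_
  have ht0 : (0:ℝ) < t := ht
  have htp : (0:ℝ) < t ^ (1/α) := Real.rpow_pos_of_pos ht0 _
  have hfneg : (c * t ^ (1/α)) ^ (-α) = s⁻¹ * t⁻¹ := by
    rw [Real.mul_rpow hc0.le htp.le, hc, ← Real.rpow_mul hs.le, ← Real.rpow_mul ht0.le,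
      show (1/α)*(-α) = (-1:ℝ) by field_simp, Real.rpow_neg_one, Real.rpow_neg_one]
  rw [smul_eq_mul, hfneg, abs_of_pos (by positivity)]
  have h1t : (0:ℝ) < 1 + t := by linarith
  have e1 : 1 - 1/(1 + s * (s⁻¹ * t⁻¹)) = 1/(1+t) := by
    rw [show s * (s⁻¹ * t⁻¹) = t⁻¹ by field_simp]
    rw [show (1:ℝ) + t⁻¹ = (1+t)/t by field_simp; ring]
    rw [one_div_div]
    field_simp
    ring
  rw [e1]
  have e2 : c * c = s ^ (2/α) := by rw [hc, ← Real.rpow_add hs]; congr 1; ring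
  have e3 : t ^ (1/α-1) * t ^ (1/α) = t ^ (2/α-1) := by
    rw [← Real.rpow_add ht0]; congr 1; ring
  calc c * (1/α * t ^ (1/α-1)) * (c * t ^ (1/α) * (1/(1+t)))
      = (c * c) * (t ^ (1/α-1) * t ^ (1/α)) * (1/α) * (1/(1+t)) := by ring
    _ = 1/α * s ^ (2/α) * (t ^ (2/α-1) / (1+t)) := by rw [e2, e3]; ring


theorem stmt_17 (α : ℝ) (hα : 2 < α) (s : ℝ) (hs : 0 < s) :
    ∫ x : EuclideanSpace ℝ (Fin 2), (1 - 1 / (1 + s * ‖x‖ ^ (-α)))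
      = 2 / α * π ^ 2 * s ^ (2 / α) * (1 / Real.sin (2 * π / α)) := by
  have hα0 : (0:ℝ) < α := by linarith
  have hp0 : (0:ℝ) < 2/α := by positivity
  have hp1 : (2:ℝ)/α < 1 := by rw [div_lt_one hα0]; linarith
  have hb := beta_real (2/α) hp0 hp1
  have hm := mellin_one_add (2/α) hp0 hp1 hb
  have hr := radial_int α hα s hs hm
  have hdim : Module.finrank ℝ (EuclideanSpace ℝ (Fin 2)) = 2 := by
    simp [finrank_euclideanSpace]
  have hball : (volume (Metric.ball (0 : EuclideanSpace ℝ (Fin 2)) 1)).toReal = π := by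
    rw [EuclideanSpace.volume_ball]
    simp [Real.sq_sqrt Real.pi_pos.le]
    rw [show (1:ℝ)+1 = 2 by norm_num, Real.Gamma_two, div_one,
      ENNReal.toReal_ofReal Real.pi_pos.le]
  rw [MeasureTheory.integral_fun_norm_addHaar (volume : Measure (EuclideanSpace ℝ (Fin 2)))
    (fun r => 1 - 1 / (1 + s * r ^ (-α)))]
  rw [hdim, measureReal_def, hball]
  have : ∫ y in Ioi (0:ℝ), y ^ (2 - 1) • (1 - 1 / (1 + s * y ^ (-α)))
      = ∫ y in Ioi (0:ℝ), y * (1 - 1 / (1 + s * y ^ (-α))) := by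
    refine setIntegral_congr_fun measurableSet_Ioi fun y hy => ?_
    simp [smul_eq_mul]
  rw [this, hr]
  rw [show π * (2/α) = 2 * π / α by ring]
  simp only [smul_eq_mul, nsmul_eq_mul, Nat.cast_ofNat]
  ring
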